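/- Fifth (new) conditional Ingleton inequality [5cI]: let ξ_X, ξ_Y, ξ_Z, ξ_U be discrete random variables with nonempty finite ranges on a common probability space, and let h be the entropy function assigning to each subset S of {X, Y, Z, U} the Shannon entropy of the joint distribution of (ξ_i)_{i∈S}. If ξ_X ⊥ ξ_Z | ξ_U and ξ_Y ⊥ ξ_Z | ξ_U, then □h(X,Y) ≥ 0. -/

import Mathlib

open MeasureTheory

/-- The probability that the discrete random variable `f` takes the value `x`. -/
noncomputable def probOf {Ω S : Type*} [MeasurableSpace Ω] (μ : Measure Ω)
    (f : Ω → S) (x : S) : ℝ :=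
  (μ {ω | f ω = x}).toReal

/-- The Shannon entropy `−Σ_x p(x)·ln p(x)` of the distribution of a discrete
random variable `f` with finite range `S`. -/
noncomputable def entropyOf {Ω S : Type*} [MeasurableSpace Ω] [Fintype S]
    (μ : Measure Ω) (f : Ω → S) : ℝ :=
  ∑ x : S, Real.negMulLog (probOf μ f x)

/-- Conditional independence of discrete random variables:
`P(f = a, g = b, k = c) · P(k = c) = P(f = a, k = c) · P(g = b, k = c)` for all values. -/
def CondIndepRV {Ω A B C : Type*} [MeasurableSpace Ω] (μ : Measure Ω)
    (f : Ω → A) (g : Ω → B) (k : Ω → C) : Prop :=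
  ∀ (a : A) (b : B) (c : C),
    μ {ω | f ω = a ∧ g ω = b ∧ k ω = c} * μ {ω | k ω = c} =
    μ {ω | f ω = a ∧ k ω = c} * μ {ω | g ω = b ∧ k ω = c}

/-- Unconditional independence: the case of a constant conditioning variable. -/
def IndepRV {Ω A B : Type*} [MeasurableSpace Ω] (μ : Measure Ω)
    (f : Ω → A) (g : Ω → B) : Prop :=
  CondIndepRV μ f g (fun _ => ())

/-- The Ingleton expression □h(X,Y) for the entropy function `h` of the four
discrete random variables `ξX, ξY, ξZ, ξU` (entropies of joint sub-vectors). -/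
noncomputable def ingletonEnt {Ω SX SY SZ SU : Type*} [MeasurableSpace Ω]
    [Fintype SX] [Fintype SY] [Fintype SZ] [Fintype SU] (μ : Measure Ω)
    (ξX : Ω → SX) (ξY : Ω → SY) (ξZ : Ω → SZ) (ξU : Ω → SU) : ℝ :=
  - entropyOf μ (fun ω => (ξX ω, ξY ω)) + entropyOf μ (fun ω => (ξX ω, ξZ ω))
  + entropyOf μ (fun ω => (ξX ω, ξU ω)) + entropyOf μ (fun ω => (ξY ω, ξZ ω))
  + entropyOf μ (fun ω => (ξY ω, ξU ω)) + entropyOf μ (fun ω => (ξZ ω, ξU ω))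
  - entropyOf μ ξZ - entropyOf μ ξU
  - entropyOf μ (fun ω => (ξX ω, ξZ ω, ξU ω)) - entropyOf μ (fun ω => (ξY ω, ξZ ω, ξU ω))

set_option maxHeartbeats 2000000

set_option linter.unusedSectionVars false
open Real

namespace CI5

variable {T V W : Type*} [Fintype T] [Fintype V] [Fintype W]

noncomputable def marg [DecidableEq V] (r : T → ℝ) (e : T → V) (v : V) : ℝ :=
  ∑ t : T, if e t = v then r t else 0

variable [DecidableEq V] [DecidableEq W]

lemma marg_nonneg {r : T → ℝ} (hr : ∀ t, 0 ≤ r t) (e : T → V) (v : V) :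
    0 ≤ marg r e v := by
  apply Finset.sum_nonneg; intro t _; split <;> simp [hr t]

lemma sum_marg (r : T → ℝ) (e : T → V) : ∑ v : V, marg r e v = ∑ t : T, r t := by
  simp only [marg]
  rw [Finset.sum_comm]
  simp

lemma marg_comp (r : T → ℝ) (e : T → V) (σ : V → W) (w : W) :
    marg (marg r e) σ w = marg r (fun t => σ (e t)) w := by
  simp only [marg]
  have key : ∀ v : V, (if σ v = w then ∑ t : T, (if e t = v then r t else 0) else 0)
      = ∑ t : T, (if e t = v then (if σ (e t) = w then r t else 0) else 0) := by
    intro v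
    by_cases h : σ v = w
    · rw [if_pos h]; apply Finset.sum_congr rfl; intro t _
      by_cases h2 : e t = v
      · simp [h2, h]
      · simp [h2]
    · rw [if_neg h, eq_comm]
      apply Finset.sum_eq_zero; intro t _
      by_cases h2 : e t = v
      · simp [h2, h]
      · simp [h2]
  rw [Finset.sum_congr rfl (fun v _ => key v), Finset.sum_comm]
  apply Finset.sum_congr rfl; intro t _
  rw [Finset.sum_ite_eq (Finset.univ : Finset V) (e t)
    (fun _ => if σ (e t) = w then r t else 0)]
  simp

lemma le_marg {r : T → ℝ} (hr : ∀ t, 0 ≤ r t) (e : T → V) (t : T) :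
    r t ≤ marg r e (e t) := by
  rw [marg]
  have := Finset.single_le_sum (f := fun t' => if e t' = e t then r t' else 0)
    (fun t' _ => by split <;> simp [hr t']) (Finset.mem_univ t)
  simpa using this

lemma marg_apply_inj {r : T → ℝ} {σ : T → V} (hσ : Function.Injective σ) (t : T) :
    marg r σ (σ t) = r t := by
  rw [marg, Finset.sum_eq_single t]
  · simp
  · intro t' _ ht'; rw [if_neg (fun h => ht' (hσ h))]
  · simp

lemma H_marg_inj {r : T → ℝ} {σ : T → V} (hσ : Function.Injective σ) :
    ∑ v : V, negMulLog (marg r σ v) = ∑ t : T, negMulLog (r t) := by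
  rw [← Finset.sum_subset (Finset.subset_univ (Finset.univ.image σ))]
  · rw [Finset.sum_image (fun a _ b _ h => hσ h)]
    exact Finset.sum_congr rfl (fun t _ => by rw [marg_apply_inj hσ])
  · intro v _ hv
    have : marg r σ v = 0 := by
      rw [marg, Finset.sum_eq_zero]
      intro t _
      rw [if_neg]
      intro h; exact hv (Finset.mem_image.2 ⟨t, Finset.mem_univ t, h⟩)
    simp [this]

/-- entropy of a marginal, expanded as sum over the base space -/
lemma H_marg_expand (r : T → ℝ) (e : T → V) :
    ∑ v : V, negMulLog (marg r e v) = ∑ t : T, -(r t * log (marg r e (e t))) := by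
  have : ∀ v, negMulLog (marg r e v)
      = ∑ t : T, (if e t = v then -(r t * log (marg r e (e t))) else 0) := by
    intro v
    rw [negMulLog, marg, neg_mul, Finset.sum_mul, ← Finset.sum_neg_distrib]
    apply Finset.sum_congr rfl
    intro t _
    by_cases h : e t = v
    · rw [if_pos h, if_pos h, h, marg]
    · rw [if_neg h, if_neg h, zero_mul, neg_zero]
  rw [Finset.sum_congr rfl (fun v _ => this v), Finset.sum_comm]
  simp

end CI5

namespace CI5
open Real

variable {A B C : Type*} [Fintype A] [Fintype B] [Fintype C]
  [DecidableEq A] [DecidableEq B] [DecidableEq C]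

lemma marg_snd (m : A × C → ℝ) (c : C) : marg m Prod.snd c = ∑ a : A, m (a, c) := by
  rw [marg, Fintype.sum_prod_type]
  apply Finset.sum_congr rfl; intro a _
  rw [Finset.sum_ite_eq' Finset.univ c (fun c' => m (a, c'))]
  simp

lemma sum_triple (f : A → B → C → ℝ) :
    ∑ t : A × B × C, f t.1 t.2.1 t.2.2 = ∑ c : C, ∑ a : A, ∑ b : B, f a b c := by
  rw [Fintype.sum_prod_type]
  have : ∀ a : A, ∑ p : B × C, f a p.1 p.2 = ∑ c : C, ∑ b : B, f a b c := by
    intro a; rw [Fintype.sum_prod_type]; exact Finset.sum_comm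
  rw [Finset.sum_congr rfl (fun a _ => this a)]
  exact Finset.sum_comm

section triple

variable (s : A × B × C → ℝ)

/-- marginal on A × C -/
noncomputable def mAC : A × C → ℝ := marg s (fun t => (t.1, t.2.2))
noncomputable def mBC : B × C → ℝ := marg s (fun t => (t.2.1, t.2.2))
noncomputable def mC : C → ℝ := marg s (fun t => t.2.2)

lemma sum_mAC (c : C) : ∑ a : A, mAC s (a, c) = mC s c := by
  rw [← marg_snd (mAC s) c, mAC, marg_comp]; rfl

lemma sum_mBC (c : C) : ∑ b : B, mBC s (b, c) = mC s c := by
  rw [← marg_snd (mBC s) c, mBC, marg_comp]; rfl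

lemma condIndepEq' (hs : ∀ t, 0 ≤ s t)
    (hci : ∀ a b c, s (a, b, c) * mC s c = mAC s (a, c) * mBC s (b, c)) :
    ∑ t : A × B × C, negMulLog (s t) + ∑ c : C, negMulLog (mC s c)
      = ∑ p : A × C, negMulLog (mAC s p) + ∑ p : B × C, negMulLog (mBC s p) := by
  rw [mC, mAC, mBC, H_marg_expand, H_marg_expand, H_marg_expand]
  rw [← sub_eq_zero]
  have : ∀ t : A × B × C,
      negMulLog (s t) + -(s t * log (marg s (fun t => t.2.2) t.2.2))
      - (-(s t * log (marg s (fun t => (t.1, t.2.2)) (t.1, t.2.2)))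
         + -(s t * log (marg s (fun t => (t.2.1, t.2.2)) (t.2.1, t.2.2)))) = 0 := by
    intro t
    rcases eq_or_lt_of_le (hs t) with h0 | hpos
    · simp [← h0, negMulLog]
    · have hC : 0 < marg s (fun t => t.2.2) t.2.2 :=
        lt_of_lt_of_le hpos (le_marg hs _ t)
      have hA : 0 < marg s (fun t => (t.1, t.2.2)) (t.1, t.2.2) :=
        lt_of_lt_of_le hpos (le_marg hs _ t)
      have hB : 0 < marg s (fun t => (t.2.1, t.2.2)) (t.2.1, t.2.2) :=
        lt_of_lt_of_le hpos (le_marg hs _ t)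
      have hkey : log (s t) + log (marg s (fun t => t.2.2) t.2.2)
          = log (marg s (fun t => (t.1, t.2.2)) (t.1, t.2.2))
            + log (marg s (fun t => (t.2.1, t.2.2)) (t.2.1, t.2.2)) := by
        rw [← log_mul (ne_of_gt hpos) (ne_of_gt hC), ← log_mul (ne_of_gt hA) (ne_of_gt hB)]
        congr 1
        exact hci t.1 t.2.1 t.2.2
      rw [negMulLog]
      nlinarith [hkey]
  rw [← Finset.sum_add_distrib, ← Finset.sum_add_distrib, ← Finset.sum_sub_distrib]
  exact Finset.sum_eq_zero (fun t _ => this t)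

lemma submod' (hs : ∀ t, 0 ≤ s t) (hsum : ∑ t, s t = 1) :
    ∑ t : A × B × C, negMulLog (s t) + ∑ c : C, negMulLog (mC s c)
      ≤ ∑ p : A × C, negMulLog (mAC s p) + ∑ p : B × C, negMulLog (mBC s p) := by
  rw [mC, mAC, mBC, H_marg_expand, H_marg_expand, H_marg_expand]
  rw [← sub_nonpos, ← Finset.sum_add_distrib, ← Finset.sum_add_distrib, ← Finset.sum_sub_distrib]
  set F := fun t : A × B × C =>
      negMulLog (s t) + -(s t * log (marg s (fun t => t.2.2) t.2.2))
      - (-(s t * log (marg s (fun t => (t.1, t.2.2)) (t.1, t.2.2)))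
         + -(s t * log (marg s (fun t => (t.2.1, t.2.2)) (t.2.1, t.2.2)))) with hF
  set G := fun t : A × B × C =>
      (if 0 < mC s t.2.2 then mAC s (t.1, t.2.2) * mBC s (t.2.1, t.2.2) / mC s t.2.2 else 0)
      - s t with hG
  have hFG : ∀ t, F t ≤ G t := by
    intro t
    rw [hF, hG]
    dsimp only
    rcases eq_or_lt_of_le (hs t) with h0 | hpos
    · simp only [← h0, negMulLog_zero, zero_mul, neg_zero, add_zero, sub_zero, sub_self]
      split
      · next h =>
        have : 0 ≤ mAC s (t.1, t.2.2) * mBC s (t.2.1, t.2.2) / mC s t.2.2 := by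
          apply div_nonneg (mul_nonneg (marg_nonneg hs _ _) (marg_nonneg hs _ _)) (le_of_lt h)
        simpa using this
      · simp
    · have hC : 0 < marg s (fun t => t.2.2) t.2.2 := lt_of_lt_of_le hpos (le_marg hs _ t)
      have hA : 0 < marg s (fun t => (t.1, t.2.2)) (t.1, t.2.2) :=
        lt_of_lt_of_le hpos (le_marg hs _ t)
      have hB : 0 < marg s (fun t => (t.2.1, t.2.2)) (t.2.1, t.2.2) :=
        lt_of_lt_of_le hpos (le_marg hs _ t)
      rw [if_pos (show 0 < mC s t.2.2 from hC)]
      set a := marg s (fun t => (t.1, t.2.2)) (t.1, t.2.2)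
      set b := marg s (fun t => (t.2.1, t.2.2)) (t.2.1, t.2.2)
      set c := marg s (fun t => t.2.2) t.2.2
      have hmAC : mAC s (t.1, t.2.2) = a := rfl
      have hmBC : mBC s (t.2.1, t.2.2) = b := rfl
      have hmC : mC s t.2.2 = c := rfl
      rw [hmAC, hmBC, hmC]
      have hu : 0 < a * b / (s t * c) := by positivity
      have hlog := Real.log_le_sub_one_of_pos hu
      have hlogeq : log (a * b / (s t * c)) = log a + log b - (log (s t) + log c) := by
        rw [Real.log_div (by positivity) (by positivity), Real.log_mul (ne_of_gt hA)
          (ne_of_gt hB), Real.log_mul (ne_of_gt hpos) (ne_of_gt hC)]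
      rw [hlogeq] at hlog
      have h2 : s t * (log a + log b - (log (s t) + log c))
          ≤ s t * (a * b / (s t * c) - 1) :=
        mul_le_mul_of_nonneg_left hlog (le_of_lt hpos)
      have h3 : s t * (a * b / (s t * c) - 1) = a * b / c - s t := by
        field_simp
      rw [negMulLog]
      nlinarith [h2, h3]
  calc ∑ t, F t ≤ ∑ t, G t := Finset.sum_le_sum (fun t _ => hFG t)
    _ ≤ 0 := by
        rw [hG]
        rw [Finset.sum_sub_distrib, hsum]
        have : (∑ t : A × B × C, if 0 < mC s t.2.2 then
            mAC s (t.1, t.2.2) * mBC s (t.2.1, t.2.2) / mC s t.2.2 else 0) ≤ 1 := by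
          rw [sum_triple (fun a b c => if 0 < mC s c then mAC s (a, c) * mBC s (b, c) / mC s c
            else 0)]
          have hc : ∀ c : C, (∑ a : A, ∑ b : B, if 0 < mC s c then
              mAC s (a, c) * mBC s (b, c) / mC s c else 0) ≤ mC s c := by
            intro c
            by_cases h : 0 < mC s c
            · simp only [if_pos h]
              have : (∑ a : A, ∑ b : B, mAC s (a, c) * mBC s (b, c) / mC s c)
                  = (∑ a : A, mAC s (a, c)) * (∑ b : B, mBC s (b, c)) / mC s c := by
                rw [Finset.sum_mul, Finset.sum_div]
                apply Finset.sum_congr rfl; intro a _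
                rw [Finset.mul_sum, Finset.sum_div]
              rw [this, sum_mAC, sum_mBC]
              field_simp
              exact le_refl _
            · simp only [if_neg h]
              simp only [Finset.sum_const_zero]
              exact marg_nonneg hs _ _
          calc (∑ c : C, ∑ a : A, ∑ b : B, _) ≤ ∑ c : C, mC s c :=
                Finset.sum_le_sum (fun c _ => hc c)
            _ = 1 := by rw [mC, sum_marg, hsum]
        linarith
end triple
end CI5

namespace CI5
open Real

section general
variable {T A B C : Type*} [Fintype T] [Fintype A] [Fintype B] [Fintype C]
  [DecidableEq A] [DecidableEq B] [DecidableEq C]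
  (r : T → ℝ) (f : T → A) (g : T → B) (k : T → C)

lemma mAC_push (p : A × C) :
    mAC (marg r (fun t => (f t, g t, k t))) p = marg r (fun t => (f t, k t)) p := by
  rw [mAC, marg_comp]

lemma mBC_push (p : B × C) :
    mBC (marg r (fun t => (f t, g t, k t))) p = marg r (fun t => (g t, k t)) p := by
  rw [mBC, marg_comp]

lemma mC_push (c : C) :
    mC (marg r (fun t => (f t, g t, k t))) c = marg r k c := by
  rw [mC, marg_comp]

lemma condIndepEq (hr : ∀ t, 0 ≤ r t)
    (hci : ∀ a b c, marg r (fun t => (f t, g t, k t)) (a, b, c) * marg r k c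
       = marg r (fun t => (f t, k t)) (a, c) * marg r (fun t => (g t, k t)) (b, c)) :
    ∑ v : A × B × C, negMulLog (marg r (fun t => (f t, g t, k t)) v)
      + ∑ c : C, negMulLog (marg r k c)
    = ∑ p : A × C, negMulLog (marg r (fun t => (f t, k t)) p)
      + ∑ p : B × C, negMulLog (marg r (fun t => (g t, k t)) p) := by
  have key := condIndepEq' (marg r (fun t => (f t, g t, k t)))
    (marg_nonneg hr _)
    (fun a b c => by rw [mAC_push r f g k, mBC_push r f g k, mC_push r f g k]; exact hci a b c)
  simp only [mAC_push r f g k, mBC_push r f g k, mC_push r f g k] at key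
  exact key

lemma submod (hr : ∀ t, 0 ≤ r t) (hsum : ∑ t, r t = 1) :
    ∑ v : A × B × C, negMulLog (marg r (fun t => (f t, g t, k t)) v)
      + ∑ c : C, negMulLog (marg r k c)
    ≤ ∑ p : A × C, negMulLog (marg r (fun t => (f t, k t)) p)
      + ∑ p : B × C, negMulLog (marg r (fun t => (g t, k t)) p) := by
  have key := submod' (marg r (fun t => (f t, g t, k t)))
    (marg_nonneg hr _) (by rw [sum_marg]; exact hsum)
  simp only [mAC_push r f g k, mBC_push r f g k, mC_push r f g k] at key
  exact key

end general
end CI5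

namespace CI5
lemma sum_if_const {ι : Type*} (s : Finset ι) (c : Prop) [Decidable c] (f : ι → ℝ) :
    (∑ i ∈ s, if c then f i else 0) = if c then ∑ i ∈ s, f i else 0 := by
  split <;> simp
end CI5


namespace CI5
open Real
section quad
variable {X Y Z U : Type*} [Fintype X] [Fintype Y] [Fintype Z] [Fintype U]
  [DecidableEq X] [DecidableEq Y] [DecidableEq Z] [DecidableEq U]

lemma margXZ_eq (w : X × Y × Z × U → ℝ) (x : X) (z : Z) :
    marg w (fun t => (t.1, t.2.2.1)) (x, z) = ∑ b : Y, ∑ d : U, w (x, b, z, d) := by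
  calc marg w (fun t => (t.1, t.2.2.1)) (x, z)
      = ∑ a : X, ∑ b : Y, ∑ c : Z, ∑ d : U, if (a, c) = (x, z) then w (a, b, c, d) else 0 := by
        rw [marg]; simp only [Fintype.sum_prod_type]
    _ = ∑ a : X, ∑ b : Y, ∑ c : Z, ∑ d : U, if a = x ∧ c = z then w (a, b, c, d) else 0 := by
        refine Finset.sum_congr rfl fun a _ => Finset.sum_congr rfl fun b _ =>
          Finset.sum_congr rfl fun c _ => Finset.sum_congr rfl fun d _ =>
          if_congr (by simp only [Prod.mk.injEq]) rfl rfl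
    _ = ∑ b : Y, ∑ d : U, w (x, b, z, d) := by
        simp only [ite_and, sum_if_const, Finset.sum_ite_eq', Finset.mem_univ, if_true]

lemma margYZ_eq (w : X × Y × Z × U → ℝ) (y : Y) (z : Z) :
    marg w (fun t => (t.2.1, t.2.2.1)) (y, z) = ∑ a : X, ∑ d : U, w (a, y, z, d) := by
  calc marg w (fun t => (t.2.1, t.2.2.1)) (y, z)
      = ∑ a : X, ∑ b : Y, ∑ c : Z, ∑ d : U, if (b, c) = (y, z) then w (a, b, c, d) else 0 := by
        rw [marg]; simp only [Fintype.sum_prod_type]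
    _ = ∑ a : X, ∑ b : Y, ∑ c : Z, ∑ d : U, if b = y ∧ c = z then w (a, b, c, d) else 0 := by
        refine Finset.sum_congr rfl fun a _ => Finset.sum_congr rfl fun b _ =>
          Finset.sum_congr rfl fun c _ => Finset.sum_congr rfl fun d _ =>
          if_congr (by simp only [Prod.mk.injEq]) rfl rfl
    _ = ∑ a : X, ∑ d : U, w (a, y, z, d) := by
        simp only [ite_and, sum_if_const, Finset.sum_ite_eq', Finset.mem_univ, if_true]

lemma margXY_eq (w : X × Y × Z × U → ℝ) (x : X) (y : Y) :
    marg w (fun t => (t.1, t.2.1)) (x, y) = ∑ c : Z, ∑ d : U, w (x, y, c, d) := by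
  calc marg w (fun t => (t.1, t.2.1)) (x, y)
      = ∑ a : X, ∑ b : Y, ∑ c : Z, ∑ d : U, if (a, b) = (x, y) then w (a, b, c, d) else 0 := by
        rw [marg]; simp only [Fintype.sum_prod_type]
    _ = ∑ a : X, ∑ b : Y, ∑ c : Z, ∑ d : U, if a = x ∧ b = y then w (a, b, c, d) else 0 := by
        refine Finset.sum_congr rfl fun a _ => Finset.sum_congr rfl fun b _ =>
          Finset.sum_congr rfl fun c _ => Finset.sum_congr rfl fun d _ =>
          if_congr (by simp only [Prod.mk.injEq]) rfl rfl
    _ = ∑ c : Z, ∑ d : U, w (x, y, c, d) := by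
        simp only [ite_and, sum_if_const, Finset.sum_ite_eq', Finset.mem_univ, if_true]

lemma margZU_eq (w : X × Y × Z × U → ℝ) (z : Z) (u : U) :
    marg w (fun t => (t.2.2.1, t.2.2.2)) (z, u) = ∑ a : X, ∑ b : Y, w (a, b, z, u) := by
  calc marg w (fun t => (t.2.2.1, t.2.2.2)) (z, u)
      = ∑ a : X, ∑ b : Y, ∑ c : Z, ∑ d : U, if (c, d) = (z, u) then w (a, b, c, d) else 0 := by
        rw [marg]; simp only [Fintype.sum_prod_type]
    _ = ∑ a : X, ∑ b : Y, ∑ c : Z, ∑ d : U, if c = z ∧ d = u then w (a, b, c, d) else 0 := by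
        refine Finset.sum_congr rfl fun a _ => Finset.sum_congr rfl fun b _ =>
          Finset.sum_congr rfl fun c _ => Finset.sum_congr rfl fun d _ =>
          if_congr (by simp only [Prod.mk.injEq]) rfl rfl
    _ = ∑ a : X, ∑ b : Y, w (a, b, z, u) := by
        simp only [ite_and, sum_if_const, Finset.sum_ite_eq', Finset.mem_univ, if_true]

lemma margXU_eq (w : X × Y × Z × U → ℝ) (x : X) (u : U) :
    marg w (fun t => (t.1, t.2.2.2)) (x, u) = ∑ b : Y, ∑ c : Z, w (x, b, c, u) := by
  calc marg w (fun t => (t.1, t.2.2.2)) (x, u)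
      = ∑ a : X, ∑ b : Y, ∑ c : Z, ∑ d : U, if (a, d) = (x, u) then w (a, b, c, d) else 0 := by
        rw [marg]; simp only [Fintype.sum_prod_type]
    _ = ∑ a : X, ∑ b : Y, ∑ c : Z, ∑ d : U, if a = x ∧ d = u then w (a, b, c, d) else 0 := by
        refine Finset.sum_congr rfl fun a _ => Finset.sum_congr rfl fun b _ =>
          Finset.sum_congr rfl fun c _ => Finset.sum_congr rfl fun d _ =>
          if_congr (by simp only [Prod.mk.injEq]) rfl rfl
    _ = ∑ b : Y, ∑ c : Z, w (x, b, c, u) := by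
        simp only [ite_and, sum_if_const, Finset.sum_ite_eq', Finset.mem_univ, if_true]

lemma margYU_eq (w : X × Y × Z × U → ℝ) (y : Y) (u : U) :
    marg w (fun t => (t.2.1, t.2.2.2)) (y, u) = ∑ a : X, ∑ c : Z, w (a, y, c, u) := by
  calc marg w (fun t => (t.2.1, t.2.2.2)) (y, u)
      = ∑ a : X, ∑ b : Y, ∑ c : Z, ∑ d : U, if (b, d) = (y, u) then w (a, b, c, d) else 0 := by
        rw [marg]; simp only [Fintype.sum_prod_type]
    _ = ∑ a : X, ∑ b : Y, ∑ c : Z, ∑ d : U, if b = y ∧ d = u then w (a, b, c, d) else 0 := by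
        refine Finset.sum_congr rfl fun a _ => Finset.sum_congr rfl fun b _ =>
          Finset.sum_congr rfl fun c _ => Finset.sum_congr rfl fun d _ =>
          if_congr (by simp only [Prod.mk.injEq]) rfl rfl
    _ = ∑ a : X, ∑ c : Z, w (a, y, c, u) := by
        simp only [ite_and, sum_if_const, Finset.sum_ite_eq', Finset.mem_univ, if_true]

lemma margZ_eq (w : X × Y × Z × U → ℝ) (z : Z) :
    marg w (fun t => t.2.2.1) (z) = ∑ a : X, ∑ b : Y, ∑ d : U, w (a, b, z, d) := by
  calc marg w (fun t => t.2.2.1) (z)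
      = ∑ a : X, ∑ b : Y, ∑ c : Z, ∑ d : U, if c = z then w (a, b, c, d) else 0 := by
        rw [marg]; simp only [Fintype.sum_prod_type]
    _ = ∑ a : X, ∑ b : Y, ∑ d : U, w (a, b, z, d) := by
        simp only [sum_if_const, Finset.sum_ite_eq', Finset.mem_univ, if_true]

lemma margU_eq (w : X × Y × Z × U → ℝ) (u : U) :
    marg w (fun t => t.2.2.2) (u) = ∑ a : X, ∑ b : Y, ∑ c : Z, w (a, b, c, u) := by
  calc marg w (fun t => t.2.2.2) (u)
      = ∑ a : X, ∑ b : Y, ∑ c : Z, ∑ d : U, if d = u then w (a, b, c, d) else 0 := by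
        rw [marg]; simp only [Fintype.sum_prod_type]
    _ = ∑ a : X, ∑ b : Y, ∑ c : Z, w (a, b, c, u) := by
        simp only [sum_if_const, Finset.sum_ite_eq', Finset.mem_univ, if_true]

lemma margXYU_eq (w : X × Y × Z × U → ℝ) (x : X) (y : Y) (u : U) :
    marg w (fun t => (t.1, t.2.1, t.2.2.2)) (x, y, u) = ∑ c : Z, w (x, y, c, u) := by
  calc marg w (fun t => (t.1, t.2.1, t.2.2.2)) (x, y, u)
      = ∑ a : X, ∑ b : Y, ∑ c : Z, ∑ d : U, if (a, b, d) = (x, y, u) then w (a, b, c, d) else 0 := by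
        rw [marg]; simp only [Fintype.sum_prod_type]
    _ = ∑ a : X, ∑ b : Y, ∑ c : Z, ∑ d : U, if a = x ∧ b = y ∧ d = u then w (a, b, c, d) else 0 := by
        refine Finset.sum_congr rfl fun a _ => Finset.sum_congr rfl fun b _ =>
          Finset.sum_congr rfl fun c _ => Finset.sum_congr rfl fun d _ =>
          if_congr (by simp only [Prod.mk.injEq]) rfl rfl
    _ = ∑ c : Z, w (x, y, c, u) := by
        simp only [ite_and, sum_if_const, Finset.sum_ite_eq', Finset.mem_univ, if_true]

lemma margXZU_eq (w : X × Y × Z × U → ℝ) (x : X) (z : Z) (u : U) :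
    marg w (fun t => (t.1, t.2.2.1, t.2.2.2)) (x, z, u) = ∑ b : Y, w (x, b, z, u) := by
  calc marg w (fun t => (t.1, t.2.2.1, t.2.2.2)) (x, z, u)
      = ∑ a : X, ∑ b : Y, ∑ c : Z, ∑ d : U, if (a, c, d) = (x, z, u) then w (a, b, c, d) else 0 := by
        rw [marg]; simp only [Fintype.sum_prod_type]
    _ = ∑ a : X, ∑ b : Y, ∑ c : Z, ∑ d : U, if a = x ∧ c = z ∧ d = u then w (a, b, c, d) else 0 := by
        refine Finset.sum_congr rfl fun a _ => Finset.sum_congr rfl fun b _ =>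
          Finset.sum_congr rfl fun c _ => Finset.sum_congr rfl fun d _ =>
          if_congr (by simp only [Prod.mk.injEq]) rfl rfl
    _ = ∑ b : Y, w (x, b, z, u) := by
        simp only [ite_and, sum_if_const, Finset.sum_ite_eq', Finset.mem_univ, if_true]

lemma margYZU_eq (w : X × Y × Z × U → ℝ) (y : Y) (z : Z) (u : U) :
    marg w (fun t => (t.2.1, t.2.2.1, t.2.2.2)) (y, z, u) = ∑ a : X, w (a, y, z, u) := by
  calc marg w (fun t => (t.2.1, t.2.2.1, t.2.2.2)) (y, z, u)
      = ∑ a : X, ∑ b : Y, ∑ c : Z, ∑ d : U, if (b, c, d) = (y, z, u) then w (a, b, c, d) else 0 := by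
        rw [marg]; simp only [Fintype.sum_prod_type]
    _ = ∑ a : X, ∑ b : Y, ∑ c : Z, ∑ d : U, if b = y ∧ c = z ∧ d = u then w (a, b, c, d) else 0 := by
        refine Finset.sum_congr rfl fun a _ => Finset.sum_congr rfl fun b _ =>
          Finset.sum_congr rfl fun c _ => Finset.sum_congr rfl fun d _ =>
          if_congr (by simp only [Prod.mk.injEq]) rfl rfl
    _ = ∑ a : X, w (a, y, z, u) := by
        simp only [ite_and, sum_if_const, Finset.sum_ite_eq', Finset.mem_univ, if_true]

end quad

section triple3
variable {A B C : Type*} [Fintype A] [Fintype B] [Fintype C]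
  [DecidableEq A] [DecidableEq B] [DecidableEq C]

lemma marg3_13_eq (m : A × B × C → ℝ) (a : A) (c : C) :
    marg m (fun p => (p.1, p.2.2)) (a, c) = ∑ b : B, m (a, b, c) := by
  calc marg m (fun p => (p.1, p.2.2)) (a, c)
      = ∑ a' : A, ∑ b : B, ∑ c' : C, if (a', c') = (a, c) then m (a', b, c') else 0 := by
        rw [marg]; simp only [Fintype.sum_prod_type]
    _ = ∑ a' : A, ∑ b : B, ∑ c' : C, if a' = a ∧ c' = c then m (a', b, c') else 0 := by
        refine Finset.sum_congr rfl fun a' _ => Finset.sum_congr rfl fun b _ =>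
          Finset.sum_congr rfl fun c' _ => if_congr (by simp only [Prod.mk.injEq]) rfl rfl
    _ = ∑ b : B, m (a, b, c) := by
        simp only [ite_and, sum_if_const, Finset.sum_ite_eq', Finset.mem_univ, if_true]

lemma marg3_3_eq (m : A × B × C → ℝ) (c : C) :
    marg m (fun p => p.2.2) c = ∑ a : A, ∑ b : B, m (a, b, c) := by
  calc marg m (fun p => p.2.2) c
      = ∑ a : A, ∑ b : B, ∑ c' : C, if c' = c then m (a, b, c') else 0 := by
        rw [marg]; simp only [Fintype.sum_prod_type]
    _ = ∑ a : A, ∑ b : B, m (a, b, c) := by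
        simp only [sum_if_const, Finset.sum_ite_eq', Finset.mem_univ, if_true]

lemma marg2_snd_eq (m : A × B → ℝ) (b : B) :
    marg m Prod.snd b = ∑ a : A, m (a, b) := by
  calc marg m Prod.snd b
      = ∑ a : A, ∑ b' : B, if b' = b then m (a, b') else 0 := by
        rw [marg]; simp only [Fintype.sum_prod_type]
    _ = ∑ a : A, m (a, b) := by
        simp only [sum_if_const, Finset.sum_ite_eq', Finset.mem_univ, if_true]

lemma marg2_fst_eq (m : A × B → ℝ) (a : A) :
    marg m Prod.fst a = ∑ b : B, m (a, b) := by
  calc marg m Prod.fst a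
      = ∑ a' : A, ∑ b : B, if a' = a then m (a', b) else 0 := by
        rw [marg]; simp only [Fintype.sum_prod_type]
    _ = ∑ b : B, m (a, b) := by
        simp only [sum_if_const, Finset.sum_ite_eq', Finset.mem_univ, if_true]

end triple3
end CI5

namespace CI5
open Real

section helpers
variable {A B C : Type*} [Fintype A] [Fintype B] [Fintype C]
  [DecidableEq A] [DecidableEq B] [DecidableEq C]

lemma marg3_23_eq (m : A × B × C → ℝ) (b : B) (c : C) :
    marg m (fun p => (p.2.1, p.2.2)) (b, c) = ∑ a : A, m (a, b, c) := by
  calc marg m (fun p => (p.2.1, p.2.2)) (b, c)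
      = ∑ a' : A, ∑ b' : B, ∑ c' : C, if (b', c') = (b, c) then m (a', b', c') else 0 := by
        rw [marg]; simp only [Fintype.sum_prod_type]
    _ = ∑ a' : A, ∑ b' : B, ∑ c' : C, if b' = b ∧ c' = c then m (a', b', c') else 0 := by
        refine Finset.sum_congr rfl fun a' _ => Finset.sum_congr rfl fun b' _ =>
          Finset.sum_congr rfl fun c' _ => if_congr (by simp only [Prod.mk.injEq]) rfl rfl
    _ = ∑ a : A, m (a, b, c) := by
        simp only [ite_and, sum_if_const, Finset.sum_ite_eq', Finset.mem_univ, if_true]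

lemma sum_rot3 (f : A → B → C → ℝ) :
    ∑ a : A, ∑ b : B, ∑ c : C, f a b c = ∑ c : C, ∑ a : A, ∑ b : B, f a b c := by
  calc ∑ a : A, ∑ b : B, ∑ c : C, f a b c
      = ∑ a : A, ∑ c : C, ∑ b : B, f a b c :=
        Finset.sum_congr rfl fun a _ => Finset.sum_comm
    _ = ∑ c : C, ∑ a : A, ∑ b : B, f a b c := Finset.sum_comm

end helpers

section helpers2
variable {T V W : Type*} [Fintype T] [Fintype V] [Fintype W] [DecidableEq V] [DecidableEq W]

lemma H_marg_comp_inj (r : T → ℝ) (e : T → V) {σ : V → W} (hσ : Function.Injective σ) :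
    ∑ w : W, negMulLog (marg r (fun t => σ (e t)) w) = ∑ v : V, negMulLog (marg r e v) := by
  rw [← H_marg_inj (r := marg r e) hσ]
  exact Finset.sum_congr rfl fun w _ => by rw [marg_comp]

end helpers2
end CI5

namespace CI5
open Real

section qsec
variable {X Y Z U : Type*} [Fintype X] [Fintype Y] [Fintype Z] [Fintype U]
  [DecidableEq X] [DecidableEq Y] [DecidableEq Z] [DecidableEq U]

/-- the coupled distribution making Z' independent of (X,Y) given U -/
noncomputable def qdist (r : X × Y × Z × U → ℝ) : X × Y × Z × U → ℝ := fun t =>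
  if marg r (fun t => t.2.2.2) t.2.2.2 = 0 then 0
  else marg r (fun t => (t.1, t.2.1, t.2.2.2)) (t.1, t.2.1, t.2.2.2) * marg r (fun t => (t.2.2.1, t.2.2.2)) (t.2.2.1, t.2.2.2)
        / marg r (fun t => t.2.2.2) t.2.2.2

variable (r : X × Y × Z × U → ℝ)

lemma qdist_apply (x : X) (y : Y) (z : Z) (u : U) :
    qdist r (x, y, z, u) =
      if marg r (fun t => t.2.2.2) u = 0 then 0
      else marg r (fun t => (t.1, t.2.1, t.2.2.2)) (x, y, u) * marg r (fun t => (t.2.2.1, t.2.2.2)) (z, u) / marg r (fun t => t.2.2.2) u := rfl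

variable (hr : ∀ t, 0 ≤ r t)
include hr

lemma r_zero (x : X) (y : Y) (z : Z) (u : U) (h : marg r (fun t => t.2.2.2) u = 0) :
    r (x, y, z, u) = 0 := by
  have h5 : r (x, y, z, u) ≤ marg r (fun t => t.2.2.2) u := le_marg hr _ (x, y, z, u)
  have := hr (x, y, z, u)
  linarith

lemma sum_XYU_y (x : X) (u : U) :
    ∑ y : Y, marg r (fun t => (t.1, t.2.1, t.2.2.2)) (x, y, u) = marg r (fun t => (t.1, t.2.2.2)) (x, u) := by
  rw [← marg3_13_eq (marg r (fun t => (t.1, t.2.1, t.2.2.2))) x u, marg_comp]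

lemma sum_XYU_x (y : Y) (u : U) :
    ∑ x : X, marg r (fun t => (t.1, t.2.1, t.2.2.2)) (x, y, u) = marg r (fun t => (t.2.1, t.2.2.2)) (y, u) := by
  rw [← marg3_23_eq (marg r (fun t => (t.1, t.2.1, t.2.2.2))) y u, marg_comp]

lemma sum_XYU_xy (u : U) :
    ∑ x : X, ∑ y : Y, marg r (fun t => (t.1, t.2.1, t.2.2.2)) (x, y, u) = marg r (fun t => t.2.2.2) u := by
  rw [show (∑ x : X, ∑ y : Y, marg r (fun t => (t.1, t.2.1, t.2.2.2)) (x, y, u))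
      = marg (marg r (fun t => (t.1, t.2.1, t.2.2.2))) (fun p => p.2.2) u from (marg3_3_eq _ u).symm]
  rw [marg_comp]

lemma sum_ZU_z (u : U) :
    ∑ z : Z, marg r (fun t => (t.2.2.1, t.2.2.2)) (z, u) = marg r (fun t => t.2.2.2) u := by
  rw [← marg2_snd_eq (marg r (fun t => (t.2.2.1, t.2.2.2))) u, marg_comp]

lemma XYU_zero (x : X) (y : Y) (u : U) (h : marg r (fun t => t.2.2.2) u = 0) :
    marg r (fun t => (t.1, t.2.1, t.2.2.2)) (x, y, u) = 0 := by
  rw [margXYU_eq]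
  exact Finset.sum_eq_zero fun z _ => r_zero r hr x y z u h

lemma ZU_zero (z : Z) (u : U) (h : marg r (fun t => t.2.2.2) u = 0) :
    marg r (fun t => (t.2.2.1, t.2.2.2)) (z, u) = 0 := by
  rw [margZU_eq]
  exact Finset.sum_eq_zero fun x _ => Finset.sum_eq_zero fun y _ => r_zero r hr x y z u h

lemma XZU_zero (x : X) (z : Z) (u : U) (h : marg r (fun t => t.2.2.2) u = 0) :
    marg r (fun t => (t.1, t.2.2.1, t.2.2.2)) (x, z, u) = 0 := by
  rw [margXZU_eq]
  exact Finset.sum_eq_zero fun y _ => r_zero r hr x y z u h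

lemma YZU_zero (y : Y) (z : Z) (u : U) (h : marg r (fun t => t.2.2.2) u = 0) :
    marg r (fun t => (t.2.1, t.2.2.1, t.2.2.2)) (y, z, u) = 0 := by
  rw [margYZU_eq]
  exact Finset.sum_eq_zero fun x _ => r_zero r hr x y z u h

lemma qdist_nonneg : ∀ t, 0 ≤ qdist r t := by
  rintro ⟨x, y, z, u⟩
  rw [qdist_apply]
  split
  · exact le_refl 0
  · exact div_nonneg (mul_nonneg (marg_nonneg hr _ _) (marg_nonneg hr _ _)) (marg_nonneg hr _ _)

lemma qdist_mul (x : X) (y : Y) (z : Z) (u : U) :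
    qdist r (x, y, z, u) * marg r (fun t => t.2.2.2) u
      = marg r (fun t => (t.1, t.2.1, t.2.2.2)) (x, y, u) * marg r (fun t => (t.2.2.1, t.2.2.2)) (z, u) := by
  rw [qdist_apply]
  by_cases h : marg r (fun t => t.2.2.2) u = 0
  · rw [if_pos h, h, mul_zero, XYU_zero r hr x y u h, zero_mul]
  · rw [if_neg h, div_mul_cancel₀ _ h]

lemma q_sum_z (x : X) (y : Y) (u : U) :
    ∑ z : Z, qdist r (x, y, z, u) = marg r (fun t => (t.1, t.2.1, t.2.2.2)) (x, y, u) := by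
  by_cases h : marg r (fun t => t.2.2.2) u = 0
  · simp only [qdist_apply, if_pos h, Finset.sum_const_zero]
    exact (XYU_zero r hr x y u h).symm
  · simp only [qdist_apply, if_neg h]
    rw [show (∑ z : Z, marg r (fun t => (t.1, t.2.1, t.2.2.2)) (x, y, u) * marg r (fun t => (t.2.2.1, t.2.2.2)) (z, u)
          / marg r (fun t => t.2.2.2) u)
        = marg r (fun t => (t.1, t.2.1, t.2.2.2)) (x, y, u) * (∑ z : Z, marg r (fun t => (t.2.2.1, t.2.2.2)) (z, u))
          / marg r (fun t => t.2.2.2) u from by rw [Finset.mul_sum, Finset.sum_div]]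
    rw [sum_ZU_z r hr]
    field_simp

lemma q_margXYU (x : X) (y : Y) (u : U) :
    marg (qdist r) (fun t => (t.1, t.2.1, t.2.2.2)) (x, y, u) = marg r (fun t => (t.1, t.2.1, t.2.2.2)) (x, y, u) := by
  rw [margXYU_eq, q_sum_z r hr]

lemma q_margZU (z : Z) (u : U) :
    marg (qdist r) (fun t => (t.2.2.1, t.2.2.2)) (z, u) = marg r (fun t => (t.2.2.1, t.2.2.2)) (z, u) := by
  rw [margZU_eq]
  by_cases h : marg r (fun t => t.2.2.2) u = 0
  · simp only [qdist_apply, if_pos h]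
    simp only [Finset.sum_const_zero]
    exact (ZU_zero r hr z u h).symm
  · simp only [qdist_apply, if_neg h]
    rw [show (∑ x : X, ∑ y : Y, marg r (fun t => (t.1, t.2.1, t.2.2.2)) (x, y, u) * marg r (fun t => (t.2.2.1, t.2.2.2)) (z, u)
          / marg r (fun t => t.2.2.2) u)
        = (∑ x : X, ∑ y : Y, marg r (fun t => (t.1, t.2.1, t.2.2.2)) (x, y, u)) * marg r (fun t => (t.2.2.1, t.2.2.2)) (z, u)
          / marg r (fun t => t.2.2.2) u from by
      rw [Finset.sum_mul, Finset.sum_div]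
      exact Finset.sum_congr rfl fun x _ => by rw [Finset.sum_mul, Finset.sum_div]]
    rw [sum_XYU_xy r hr]
    field_simp

lemma q_margU (u : U) :
    marg (qdist r) (fun t => t.2.2.2) u = marg r (fun t => t.2.2.2) u := by
  rw [margU_eq]
  rw [Finset.sum_congr rfl fun x _ => Finset.sum_congr rfl fun y _ => q_sum_z r hr x y u]
  exact sum_XYU_xy r hr u

lemma q_sum_one (hsum : ∑ t, r t = 1) : ∑ t, qdist r t = 1 := by
  rw [← sum_marg (qdist r) (fun t => t.2.2.2)]
  rw [Finset.sum_congr rfl fun u _ => q_margU r hr u]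
  rw [sum_marg]
  exact hsum

lemma q_margXY (x : X) (y : Y) :
    marg (qdist r) (fun t => (t.1, t.2.1)) (x, y) = marg r (fun t => (t.1, t.2.1)) (x, y) := by
  calc marg (qdist r) (fun t => (t.1, t.2.1)) (x, y)
      = ∑ z : Z, ∑ u : U, qdist r (x, y, z, u) := margXY_eq _ x y
    _ = ∑ u : U, ∑ z : Z, qdist r (x, y, z, u) := Finset.sum_comm
    _ = ∑ u : U, marg r (fun t => (t.1, t.2.1, t.2.2.2)) (x, y, u) :=
        Finset.sum_congr rfl fun u _ => q_sum_z r hr x y u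
    _ = ∑ u : U, ∑ z : Z, r (x, y, z, u) :=
        Finset.sum_congr rfl fun u _ => margXYU_eq r x y u
    _ = ∑ z : Z, ∑ u : U, r (x, y, z, u) := Finset.sum_comm
    _ = marg r (fun t => (t.1, t.2.1)) (x, y) := (margXY_eq r x y).symm

lemma q_margZ (z : Z) :
    marg (qdist r) (fun t => t.2.2.1) z = marg r (fun t => t.2.2.1) z := by
  calc marg (qdist r) (fun t => t.2.2.1) z
      = ∑ x : X, ∑ y : Y, ∑ u : U, qdist r (x, y, z, u) := margZ_eq _ z
    _ = ∑ u : U, ∑ x : X, ∑ y : Y, qdist r (x, y, z, u) :=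
        sum_rot3 (fun x y u => qdist r (x, y, z, u))
    _ = ∑ u : U, marg (qdist r) (fun t => (t.2.2.1, t.2.2.2)) (z, u) :=
        Finset.sum_congr rfl fun u _ => (margZU_eq _ z u).symm
    _ = ∑ u : U, marg r (fun t => (t.2.2.1, t.2.2.2)) (z, u) :=
        Finset.sum_congr rfl fun u _ => q_margZU r hr z u
    _ = ∑ u : U, ∑ x : X, ∑ y : Y, r (x, y, z, u) :=
        Finset.sum_congr rfl fun u _ => margZU_eq r z u
    _ = ∑ x : X, ∑ y : Y, ∑ u : U, r (x, y, z, u) :=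
        (sum_rot3 (fun x y u => r (x, y, z, u))).symm
    _ = marg r (fun t => t.2.2.1) z := (margZ_eq r z).symm

lemma q_margXZ
    (h1 : ∀ x z u, marg r (fun t => (t.1, t.2.2.1, t.2.2.2)) (x, z, u) * marg r (fun t => t.2.2.2) u
        = marg r (fun t => (t.1, t.2.2.2)) (x, u) * marg r (fun t => (t.2.2.1, t.2.2.2)) (z, u))
    (x : X) (z : Z) :
    marg (qdist r) (fun t => (t.1, t.2.2.1)) (x, z) = marg r (fun t => (t.1, t.2.2.1)) (x, z) := by
  have key : ∀ u : U, ∑ y : Y, qdist r (x, y, z, u) = marg r (fun t => (t.1, t.2.2.1, t.2.2.2)) (x, z, u) := by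
    intro u
    by_cases h : marg r (fun t => t.2.2.2) u = 0
    · simp only [qdist_apply, if_pos h, Finset.sum_const_zero]
      exact (XZU_zero r hr x z u h).symm
    · simp only [qdist_apply, if_neg h]
      rw [show (∑ y : Y, marg r (fun t => (t.1, t.2.1, t.2.2.2)) (x, y, u) * marg r (fun t => (t.2.2.1, t.2.2.2)) (z, u)
            / marg r (fun t => t.2.2.2) u)
          = (∑ y : Y, marg r (fun t => (t.1, t.2.1, t.2.2.2)) (x, y, u)) * marg r (fun t => (t.2.2.1, t.2.2.2)) (z, u)
            / marg r (fun t => t.2.2.2) u from by rw [Finset.sum_mul, Finset.sum_div]]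
      rw [sum_XYU_y r hr, eq_comm, eq_div_iff h]
      linarith [h1 x z u]
  calc marg (qdist r) (fun t => (t.1, t.2.2.1)) (x, z)
      = ∑ y : Y, ∑ u : U, qdist r (x, y, z, u) := margXZ_eq _ x z
    _ = ∑ u : U, ∑ y : Y, qdist r (x, y, z, u) := Finset.sum_comm
    _ = ∑ u : U, marg r (fun t => (t.1, t.2.2.1, t.2.2.2)) (x, z, u) := Finset.sum_congr rfl fun u _ => key u
    _ = ∑ u : U, ∑ y : Y, r (x, y, z, u) :=
        Finset.sum_congr rfl fun u _ => margXZU_eq r x z u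
    _ = ∑ y : Y, ∑ u : U, r (x, y, z, u) := Finset.sum_comm
    _ = marg r (fun t => (t.1, t.2.2.1)) (x, z) := (margXZ_eq r x z).symm

lemma q_margYZ
    (h2 : ∀ y z u, marg r (fun t => (t.2.1, t.2.2.1, t.2.2.2)) (y, z, u) * marg r (fun t => t.2.2.2) u
        = marg r (fun t => (t.2.1, t.2.2.2)) (y, u) * marg r (fun t => (t.2.2.1, t.2.2.2)) (z, u))
    (y : Y) (z : Z) :
    marg (qdist r) (fun t => (t.2.1, t.2.2.1)) (y, z) = marg r (fun t => (t.2.1, t.2.2.1)) (y, z) := by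
  have key : ∀ u : U, ∑ x : X, qdist r (x, y, z, u) = marg r (fun t => (t.2.1, t.2.2.1, t.2.2.2)) (y, z, u) := by
    intro u
    by_cases h : marg r (fun t => t.2.2.2) u = 0
    · simp only [qdist_apply, if_pos h, Finset.sum_const_zero]
      exact (YZU_zero r hr y z u h).symm
    · simp only [qdist_apply, if_neg h]
      rw [show (∑ x : X, marg r (fun t => (t.1, t.2.1, t.2.2.2)) (x, y, u) * marg r (fun t => (t.2.2.1, t.2.2.2)) (z, u)
            / marg r (fun t => t.2.2.2) u)
          = (∑ x : X, marg r (fun t => (t.1, t.2.1, t.2.2.2)) (x, y, u)) * marg r (fun t => (t.2.2.1, t.2.2.2)) (z, u)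
            / marg r (fun t => t.2.2.2) u from by rw [Finset.sum_mul, Finset.sum_div]]
      rw [sum_XYU_x r hr, eq_comm, eq_div_iff h]
      linarith [h2 y z u]
  calc marg (qdist r) (fun t => (t.2.1, t.2.2.1)) (y, z)
      = ∑ x : X, ∑ u : U, qdist r (x, y, z, u) := margYZ_eq _ y z
    _ = ∑ u : U, ∑ x : X, qdist r (x, y, z, u) := Finset.sum_comm
    _ = ∑ u : U, marg r (fun t => (t.2.1, t.2.2.1, t.2.2.2)) (y, z, u) := Finset.sum_congr rfl fun u _ => key u
    _ = ∑ u : U, ∑ x : X, r (x, y, z, u) :=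
        Finset.sum_congr rfl fun u _ => margYZU_eq r y z u
    _ = ∑ x : X, ∑ u : U, r (x, y, z, u) := Finset.sum_comm
    _ = marg r (fun t => (t.2.1, t.2.2.1)) (y, z) := (margYZ_eq r y z).symm

end qsec
end CI5

namespace CI5
open Real

theorem pure_main {X Y Z U : Type*} [Fintype X] [Fintype Y] [Fintype Z] [Fintype U]
    [DecidableEq X] [DecidableEq Y] [DecidableEq Z] [DecidableEq U]
    (r : X × Y × Z × U → ℝ) (hr : ∀ t, 0 ≤ r t) (hsum : ∑ t, r t = 1)
    (h1 : ∀ x z u, marg r (fun t => (t.1, t.2.2.1, t.2.2.2)) (x, z, u) * marg r (fun t => t.2.2.2) u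
        = marg r (fun t => (t.1, t.2.2.2)) (x, u) * marg r (fun t => (t.2.2.1, t.2.2.2)) (z, u))
    (h2 : ∀ y z u, marg r (fun t => (t.2.1, t.2.2.1, t.2.2.2)) (y, z, u) * marg r (fun t => t.2.2.2) u
        = marg r (fun t => (t.2.1, t.2.2.2)) (y, u) * marg r (fun t => (t.2.2.1, t.2.2.2)) (z, u)) :
    0 ≤ - (∑ v : X × Y, negMulLog (marg r (fun t => (t.1, t.2.1)) v)) + (∑ v : X × Z, negMulLog (marg r (fun t => (t.1, t.2.2.1)) v)) + (∑ v : X × U, negMulLog (marg r (fun t => (t.1, t.2.2.2)) v))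
      + (∑ v : Y × Z, negMulLog (marg r (fun t => (t.2.1, t.2.2.1)) v)) + (∑ v : Y × U, negMulLog (marg r (fun t => (t.2.1, t.2.2.2)) v)) + (∑ v : Z × U, negMulLog (marg r (fun t => (t.2.2.1, t.2.2.2)) v))
      - (∑ v : Z, negMulLog (marg r (fun t => t.2.2.1) v)) - (∑ v : U, negMulLog (marg r (fun t => t.2.2.2) v)) - (∑ v : X × Z × U, negMulLog (marg r (fun t => (t.1, t.2.2.1, t.2.2.2)) v)) - (∑ v : Y × Z × U, negMulLog (marg r (fun t => (t.2.1, t.2.2.1, t.2.2.2)) v)) := by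
  -- Step 1: conditional independence equalities on r
  have E1 : (∑ v : X × Z × U, negMulLog (marg r (fun t => (t.1, t.2.2.1, t.2.2.2)) v)) + (∑ v : U, negMulLog (marg r (fun t => t.2.2.2) v)) = (∑ v : X × U, negMulLog (marg r (fun t => (t.1, t.2.2.2)) v)) + (∑ v : Z × U, negMulLog (marg r (fun t => (t.2.2.1, t.2.2.2)) v)) := by
    have := condIndepEq r (fun t => t.1) (fun t => t.2.2.1) (fun t => t.2.2.2) hr
      (fun a b c => h1 a b c)
    exact this
  have E2 : (∑ v : Y × Z × U, negMulLog (marg r (fun t => (t.2.1, t.2.2.1, t.2.2.2)) v)) + (∑ v : U, negMulLog (marg r (fun t => t.2.2.2) v)) = (∑ v : Y × U, negMulLog (marg r (fun t => (t.2.1, t.2.2.2)) v)) + (∑ v : Z × U, negMulLog (marg r (fun t => (t.2.2.1, t.2.2.2)) v)) := by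
    have := condIndepEq r (fun t => t.2.1) (fun t => t.2.2.1) (fun t => t.2.2.2) hr
      (fun a b c => h2 a b c)
    exact this
  -- the auxiliary distribution
  set q : X × Y × Z × U → ℝ := qdist r with hqdef
  have hq : ∀ t, 0 ≤ q t := qdist_nonneg r hr
  have hqsum : ∑ t, q t = 1 := q_sum_one r hr hsum
  -- injective reassociations
  have hι : Function.Injective (fun t : X × Y × Z × U => ((t.1, t.2.1), t.2.2.1, t.2.2.2)) := by
    rintro ⟨a, b, c, d⟩ ⟨a', b', c', d'⟩ h
    simp only [Prod.mk.injEq] at h ⊢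
    tauto
  have hι₃ : Function.Injective (fun t : X × Y × Z × U => (t.2.2.1, t.2.2.2, (t.1, t.2.1))) := by
    rintro ⟨a, b, c, d⟩ ⟨a', b', c', d'⟩ h
    simp only [Prod.mk.injEq] at h ⊢
    tauto
  have hσ : Function.Injective (fun p : X × Y × U => ((p.1, p.2.1), p.2.2)) := by
    rintro ⟨a, b, c⟩ ⟨a', b', c'⟩ h
    simp only [Prod.mk.injEq] at h ⊢
    tauto
  have hσ₁ : Function.Injective (fun p : X × Y × Z => (p.2.2, (p.1, p.2.1))) := by
    rintro ⟨a, b, c⟩ ⟨a', b', c'⟩ h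
    simp only [Prod.mk.injEq] at h ⊢
    tauto
  have hσ₂ : Function.Injective (fun p : X × Y × U => (p.2.2, (p.1, p.2.1))) := by
    rintro ⟨a, b, c⟩ ⟨a', b', c'⟩ h
    simp only [Prod.mk.injEq] at h ⊢
    tauto
  -- E3 : conditional independence of Z' from (X,Y) given U in q
  have hciq : ∀ (ab : X × Y) (z : Z) (u : U),
      marg q (fun t => ((t.1, t.2.1), t.2.2.1, t.2.2.2)) (ab, z, u)
        * marg q (fun t => t.2.2.2) u
      = marg q (fun t => ((t.1, t.2.1), t.2.2.2)) (ab, u)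
        * marg q (fun t => (t.2.2.1, t.2.2.2)) (z, u) := by
    rintro ⟨x, y⟩ z u
    have hfull : marg q (fun t => ((t.1, t.2.1), t.2.2.1, t.2.2.2)) ((x, y), z, u)
        = q (x, y, z, u) := marg_apply_inj hι (x, y, z, u)
    have hxyu : marg q (fun t => ((t.1, t.2.1), t.2.2.2)) ((x, y), u)
        = marg q (fun t => (t.1, t.2.1, t.2.2.2)) (x, y, u) := by
      have h0 : marg q (fun t => ((t.1, t.2.1), t.2.2.2)) ((x, y), u)
          = marg (marg q (fun t => (t.1, t.2.1, t.2.2.2))) (fun p => ((p.1, p.2.1), p.2.2)) ((x, y), u) := by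
        rw [marg_comp]
      rw [h0, marg_apply_inj hσ (x, y, u)]
    rw [hfull, hxyu, q_margU r hr, q_margXYU r hr, q_margZU r hr, hqdef]
    exact qdist_mul r hr x y z u
  have E3 : (∑ t : X × Y × Z × U, negMulLog (q t)) + (∑ v : U, negMulLog (marg q (fun t => t.2.2.2) v))
      = (∑ v : X × Y × U, negMulLog (marg q (fun t => (t.1, t.2.1, t.2.2.2)) v)) + (∑ v : Z × U, negMulLog (marg q (fun t => (t.2.2.1, t.2.2.2)) v)) := by
    have := condIndepEq q (fun t => (t.1, t.2.1)) (fun t => t.2.2.1) (fun t => t.2.2.2) hq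
      (fun a b c => hciq a b c)
    rw [H_marg_inj hι] at this
    rw [show (∑ p : (X × Y) × U,
        negMulLog (marg q (fun t => ((t.1, t.2.1), t.2.2.2)) p)) = (∑ v : X × Y × U, negMulLog (marg q (fun t => (t.1, t.2.1, t.2.2.2)) v)) from
      H_marg_comp_inj q (fun t => (t.1, t.2.1, t.2.2.2)) hσ] at this
    exact this
  -- E4 : submodularity I(X;Y|Z') ≥ 0 in q
  have E4 : (∑ v : X × Y × Z, negMulLog (marg q (fun t => (t.1, t.2.1, t.2.2.1)) v)) + (∑ v : Z, negMulLog (marg q (fun t => t.2.2.1) v)) ≤ (∑ v : X × Z, negMulLog (marg q (fun t => (t.1, t.2.2.1)) v)) + (∑ v : Y × Z, negMulLog (marg q (fun t => (t.2.1, t.2.2.1)) v)) :=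
    submod q (fun t => t.1) (fun t => t.2.1) (fun t => t.2.2.1) hq hqsum
  -- E5 : submodularity I(Z';U|XY) ≥ 0 in q
  have E5 : (∑ t : X × Y × Z × U, negMulLog (q t)) + (∑ v : X × Y, negMulLog (marg q (fun t => (t.1, t.2.1)) v))
      ≤ (∑ v : X × Y × Z, negMulLog (marg q (fun t => (t.1, t.2.1, t.2.2.1)) v)) + (∑ v : X × Y × U, negMulLog (marg q (fun t => (t.1, t.2.1, t.2.2.2)) v)) := by
    have := submod q (fun t => t.2.2.1) (fun t => t.2.2.2) (fun t => (t.1, t.2.1)) hq hqsum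
    rw [H_marg_inj hι₃] at this
    rw [show (∑ p : Z × (X × Y),
        negMulLog (marg q (fun t => (t.2.2.1, (t.1, t.2.1))) p)) = (∑ v : X × Y × Z, negMulLog (marg q (fun t => (t.1, t.2.1, t.2.2.1)) v)) from
      H_marg_comp_inj q (fun t => (t.1, t.2.1, t.2.2.1)) hσ₁] at this
    rw [show (∑ p : U × (X × Y),
        negMulLog (marg q (fun t => (t.2.2.2, (t.1, t.2.1))) p)) = (∑ v : X × Y × U, negMulLog (marg q (fun t => (t.1, t.2.1, t.2.2.2)) v)) from
      H_marg_comp_inj q (fun t => (t.1, t.2.1, t.2.2.2)) hσ₂] at this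
    exact this
  -- rewrite q marginals as r marginals
  have cXZ : (∑ v : X × Z, negMulLog (marg q (fun t => (t.1, t.2.2.1)) v)) = (∑ v : X × Z, negMulLog (marg r (fun t => (t.1, t.2.2.1)) v)) :=
    Finset.sum_congr rfl fun v _ => by
      obtain ⟨x, z⟩ := v; exact congrArg negMulLog (q_margXZ r hr h1 x z)
  have cYZ : (∑ v : Y × Z, negMulLog (marg q (fun t => (t.2.1, t.2.2.1)) v)) = (∑ v : Y × Z, negMulLog (marg r (fun t => (t.2.1, t.2.2.1)) v)) :=
    Finset.sum_congr rfl fun v _ => by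
      obtain ⟨y, z⟩ := v; exact congrArg negMulLog (q_margYZ r hr h2 y z)
  have cXY : (∑ v : X × Y, negMulLog (marg q (fun t => (t.1, t.2.1)) v)) = (∑ v : X × Y, negMulLog (marg r (fun t => (t.1, t.2.1)) v)) :=
    Finset.sum_congr rfl fun v _ => by
      obtain ⟨x, y⟩ := v; exact congrArg negMulLog (q_margXY r hr x y)
  have cZU : (∑ v : Z × U, negMulLog (marg q (fun t => (t.2.2.1, t.2.2.2)) v)) = (∑ v : Z × U, negMulLog (marg r (fun t => (t.2.2.1, t.2.2.2)) v)) :=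
    Finset.sum_congr rfl fun v _ => by
      obtain ⟨z, u⟩ := v; exact congrArg negMulLog (q_margZU r hr z u)
  have cZ : (∑ v : Z, negMulLog (marg q (fun t => t.2.2.1) v)) = (∑ v : Z, negMulLog (marg r (fun t => t.2.2.1) v)) :=
    Finset.sum_congr rfl fun v _ => congrArg negMulLog (q_margZ r hr v)
  have cU : (∑ v : U, negMulLog (marg q (fun t => t.2.2.2) v)) = (∑ v : U, negMulLog (marg r (fun t => t.2.2.2) v)) :=
    Finset.sum_congr rfl fun v _ => congrArg negMulLog (q_margU r hr v)
  rw [cZU, cU] at E3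
  rw [cXZ, cYZ, cZ] at E4
  rw [cXY] at E5
  linarith [E1, E2, E3, E4, E5]

end CI5

namespace CI5
open Real MeasureTheory

lemma probOf_comp {Ω T V : Type*} [MeasurableSpace Ω] (μ : Measure Ω) [IsProbabilityMeasure μ]
    [Fintype T] [Fintype V] [DecidableEq V]
    (ξ : Ω → T) (hmeas : ∀ t, MeasurableSet {ω | ξ ω = t}) (e : T → V) (v : V) :
    probOf μ (fun ω => e (ξ ω)) v = marg (fun t => probOf μ ξ t) e v := by
  classical
  have hS : {ω | e (ξ ω) = v}
      = ⋃ t ∈ Finset.univ.filter (fun t => e t = v), {ω | ξ ω = t} := by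
    ext ω
    simp only [Set.mem_setOf_eq, Set.mem_iUnion, Finset.mem_filter, Finset.mem_univ, true_and]
    constructor
    · intro h; exact ⟨ξ ω, h, rfl⟩
    · rintro ⟨t, ht, h⟩; rw [h]; exact ht
  have hdisj : (Finset.univ.filter (fun t => e t = v) : Set T).Pairwise
      (Function.onFun Disjoint (fun t => {ω | ξ ω = t})) := by
    intro t _ t' _ htt'
    refine Set.disjoint_left.2 fun ω h1 h2 => htt' ?_
    rw [← h1, ← h2]
  rw [probOf, hS, measure_biUnion_finset hdisj (fun t _ => hmeas t),
    ENNReal.toReal_sum (fun t _ => measure_ne_top μ _), marg, Finset.sum_filter]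
  rfl

end CI5

/-- Statement: the fifth (new) conditional Ingleton inequality. -/
theorem conditional_ingleton_5cI
    {Ω : Type*} [MeasurableSpace Ω] (μ : Measure Ω) [IsProbabilityMeasure μ]
    {SX SY SZ SU : Type*}
    [Fintype SX] [Nonempty SX] [MeasurableSpace SX] [MeasurableSingletonClass SX]
    [Fintype SY] [Nonempty SY] [MeasurableSpace SY] [MeasurableSingletonClass SY]
    [Fintype SZ] [Nonempty SZ] [MeasurableSpace SZ] [MeasurableSingletonClass SZ]
    [Fintype SU] [Nonempty SU] [MeasurableSpace SU] [MeasurableSingletonClass SU]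
    (ξX : Ω → SX) (ξY : Ω → SY) (ξZ : Ω → SZ) (ξU : Ω → SU)
    (mX : Measurable ξX) (mY : Measurable ξY) (mZ : Measurable ξZ) (mU : Measurable ξU)
    (h1 : CondIndepRV μ ξX ξZ ξU) (h2 : CondIndepRV μ ξY ξZ ξU) :
    0 ≤ ingletonEnt μ ξX ξY ξZ ξU := by
  classical
  have hmeas : ∀ t : SX × SY × SZ × SU, MeasurableSet {ω | (ξX ω, ξY ω, ξZ ω, ξU ω) = t} := by
    intro t
    have hset : {ω | (ξX ω, ξY ω, ξZ ω, ξU ω) = t}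
        = (ξX ⁻¹' {t.1}) ∩ ((ξY ⁻¹' {t.2.1}) ∩ ((ξZ ⁻¹' {t.2.2.1}) ∩ (ξU ⁻¹' {t.2.2.2}))) := by
      ext ω
      simp only [Set.mem_setOf_eq, Set.mem_inter_iff, Set.mem_preimage, Set.mem_singleton_iff,
        Prod.ext_iff]
    rw [hset]
    exact (mX (measurableSet_singleton _)).inter ((mY (measurableSet_singleton _)).inter
      ((mZ (measurableSet_singleton _)).inter (mU (measurableSet_singleton _))))
  have hr : ∀ t, 0 ≤ (fun t => probOf μ (fun ω => (ξX ω, ξY ω, ξZ ω, ξU ω)) t) t := fun t => ENNReal.toReal_nonneg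
  have hsum : ∑ t, (fun t => probOf μ (fun ω => (ξX ω, ξY ω, ξZ ω, ξU ω)) t) t = 1 := by
    have h0 : probOf μ (fun _ : Ω => ()) () = CI5.marg (fun t => probOf μ (fun ω => (ξX ω, ξY ω, ξZ ω, ξU ω)) t) (fun _ : SX × SY × SZ × SU => ()) () :=
      CI5.probOf_comp μ (fun ω => (ξX ω, ξY ω, ξZ ω, ξU ω)) hmeas (fun _ => ()) ()
    have hR : CI5.marg (fun t => probOf μ (fun ω => (ξX ω, ξY ω, ξZ ω, ξU ω)) t) (fun _ : SX × SY × SZ × SU => ()) () = ∑ t, (fun t => probOf μ (fun ω => (ξX ω, ξY ω, ξZ ω, ξU ω)) t) t := by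
      rw [CI5.marg]
      simp
    have hL : probOf μ (fun _ : Ω => ()) () = 1 := by
      rw [probOf]
      have hset : {ω : Ω | () = ()} = Set.univ := by ext ω; simp
      rw [hset, measure_univ, ENNReal.toReal_one]
    rw [← hR, ← h0, hL]
  have hciX : ∀ a b c, CI5.marg (fun t => probOf μ (fun ω => (ξX ω, ξY ω, ξZ ω, ξU ω)) t) (fun t => (t.1, t.2.2.1, t.2.2.2)) (a, b, c) * CI5.marg (fun t => probOf μ (fun ω => (ξX ω, ξY ω, ξZ ω, ξU ω)) t) (fun t => t.2.2.2) c = CI5.marg (fun t => probOf μ (fun ω => (ξX ω, ξY ω, ξZ ω, ξU ω)) t) (fun t => (t.1, t.2.2.2)) (a, c) * CI5.marg (fun t => probOf μ (fun ω => (ξX ω, ξY ω, ξZ ω, ξU ω)) t) (fun t => (t.2.2.1, t.2.2.2)) (b, c) := by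
    intro a b c
    have m1 : CI5.marg (fun t => probOf μ (fun ω => (ξX ω, ξY ω, ξZ ω, ξU ω)) t) (fun t => (t.1, t.2.2.1, t.2.2.2)) (a, b, c) = (μ {ω | ξX ω = a ∧ ξZ ω = b ∧ ξU ω = c}).toReal := by
      rw [← CI5.probOf_comp μ (fun ω => (ξX ω, ξY ω, ξZ ω, ξU ω)) hmeas (fun t => (t.1, t.2.2.1, t.2.2.2)) (a, b, c), probOf]
      apply congrArg
      apply congrArg
      ext ω
      simp [Prod.ext_iff]
    have m2 : CI5.marg (fun t => probOf μ (fun ω => (ξX ω, ξY ω, ξZ ω, ξU ω)) t) (fun t => t.2.2.2) c = (μ {ω | ξU ω = c}).toReal := by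
      rw [← CI5.probOf_comp μ (fun ω => (ξX ω, ξY ω, ξZ ω, ξU ω)) hmeas (fun t => t.2.2.2) c, probOf]
    have m3 : CI5.marg (fun t => probOf μ (fun ω => (ξX ω, ξY ω, ξZ ω, ξU ω)) t) (fun t => (t.1, t.2.2.2)) (a, c) = (μ {ω | ξX ω = a ∧ ξU ω = c}).toReal := by
      rw [← CI5.probOf_comp μ (fun ω => (ξX ω, ξY ω, ξZ ω, ξU ω)) hmeas (fun t => (t.1, t.2.2.2)) (a, c), probOf]
      apply congrArg
      apply congrArg
      ext ω
      simp [Prod.ext_iff]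
    have m4 : CI5.marg (fun t => probOf μ (fun ω => (ξX ω, ξY ω, ξZ ω, ξU ω)) t) (fun t => (t.2.2.1, t.2.2.2)) (b, c) = (μ {ω | ξZ ω = b ∧ ξU ω = c}).toReal := by
      rw [← CI5.probOf_comp μ (fun ω => (ξX ω, ξY ω, ξZ ω, ξU ω)) hmeas (fun t => (t.2.2.1, t.2.2.2)) (b, c), probOf]
      apply congrArg
      apply congrArg
      ext ω
      simp [Prod.ext_iff]
    rw [m1, m2, m3, m4, ← ENNReal.toReal_mul, ← ENNReal.toReal_mul, h1 a b c]
  have hciY : ∀ a b c, CI5.marg (fun t => probOf μ (fun ω => (ξX ω, ξY ω, ξZ ω, ξU ω)) t) (fun t => (t.2.1, t.2.2.1, t.2.2.2)) (a, b, c) * CI5.marg (fun t => probOf μ (fun ω => (ξX ω, ξY ω, ξZ ω, ξU ω)) t) (fun t => t.2.2.2) c = CI5.marg (fun t => probOf μ (fun ω => (ξX ω, ξY ω, ξZ ω, ξU ω)) t) (fun t => (t.2.1, t.2.2.2)) (a, c) * CI5.marg (fun t => probOf μ (fun ω => (ξX ω, ξY ω, ξZ ω, ξU ω)) t) (fun t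 => (t.2.2.1, t.2.2.2)) (b, c) := by
    intro a b c
    have m1 : CI5.marg (fun t => probOf μ (fun ω => (ξX ω, ξY ω, ξZ ω, ξU ω)) t) (fun t => (t.2.1, t.2.2.1, t.2.2.2)) (a, b, c) = (μ {ω | ξY ω = a ∧ ξZ ω = b ∧ ξU ω = c}).toReal := by
      rw [← CI5.probOf_comp μ (fun ω => (ξX ω, ξY ω, ξZ ω, ξU ω)) hmeas (fun t => (t.2.1, t.2.2.1, t.2.2.2)) (a, b, c), probOf]
      apply congrArg
      apply congrArg
      ext ω
      simp [Prod.ext_iff]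
    have m2 : CI5.marg (fun t => probOf μ (fun ω => (ξX ω, ξY ω, ξZ ω, ξU ω)) t) (fun t => t.2.2.2) c = (μ {ω | ξU ω = c}).toReal := by
      rw [← CI5.probOf_comp μ (fun ω => (ξX ω, ξY ω, ξZ ω, ξU ω)) hmeas (fun t => t.2.2.2) c, probOf]
    have m3 : CI5.marg (fun t => probOf μ (fun ω => (ξX ω, ξY ω, ξZ ω, ξU ω)) t) (fun t => (t.2.1, t.2.2.2)) (a, c) = (μ {ω | ξY ω = a ∧ ξU ω = c}).toReal := by
      rw [← CI5.probOf_comp μ (fun ω => (ξX ω, ξY ω, ξZ ω, ξU ω)) hmeas (fun t => (t.2.1, t.2.2.2)) (a, c), probOf]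
      apply congrArg
      apply congrArg
      ext ω
      simp [Prod.ext_iff]
    have m4 : CI5.marg (fun t => probOf μ (fun ω => (ξX ω, ξY ω, ξZ ω, ξU ω)) t) (fun t => (t.2.2.1, t.2.2.2)) (b, c) = (μ {ω | ξZ ω = b ∧ ξU ω = c}).toReal := by
      rw [← CI5.probOf_comp μ (fun ω => (ξX ω, ξY ω, ξZ ω, ξU ω)) hmeas (fun t => (t.2.2.1, t.2.2.2)) (b, c), probOf]
      apply congrArg
      apply congrArg
      ext ω
      simp [Prod.ext_iff]
    rw [m1, m2, m3, m4, ← ENNReal.toReal_mul, ← ENNReal.toReal_mul, h2 a b c]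
  have main := CI5.pure_main (fun t => probOf μ (fun ω => (ξX ω, ξY ω, ξZ ω, ξU ω)) t) hr hsum hciX hciY
  have cXY : entropyOf μ (fun ω => (ξX ω, ξY ω)) = (∑ v : SX × SY, Real.negMulLog (CI5.marg (fun t => probOf μ (fun ω => (ξX ω, ξY ω, ξZ ω, ξU ω)) t) (fun t => (t.1, t.2.1)) v)) :=
    Finset.sum_congr rfl fun v _ =>
      congrArg Real.negMulLog (CI5.probOf_comp μ (fun ω => (ξX ω, ξY ω, ξZ ω, ξU ω)) hmeas (fun t => (t.1, t.2.1)) v)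
  have cXZ : entropyOf μ (fun ω => (ξX ω, ξZ ω)) = (∑ v : SX × SZ, Real.negMulLog (CI5.marg (fun t => probOf μ (fun ω => (ξX ω, ξY ω, ξZ ω, ξU ω)) t) (fun t => (t.1, t.2.2.1)) v)) :=
    Finset.sum_congr rfl fun v _ =>
      congrArg Real.negMulLog (CI5.probOf_comp μ (fun ω => (ξX ω, ξY ω, ξZ ω, ξU ω)) hmeas (fun t => (t.1, t.2.2.1)) v)
  have cXU : entropyOf μ (fun ω => (ξX ω, ξU ω)) = (∑ v : SX × SU, Real.negMulLog (CI5.marg (fun t => probOf μ (fun ω => (ξX ω, ξY ω, ξZ ω, ξU ω)) t) (fun t => (t.1, t.2.2.2)) v)) :=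
    Finset.sum_congr rfl fun v _ =>
      congrArg Real.negMulLog (CI5.probOf_comp μ (fun ω => (ξX ω, ξY ω, ξZ ω, ξU ω)) hmeas (fun t => (t.1, t.2.2.2)) v)
  have cYZ : entropyOf μ (fun ω => (ξY ω, ξZ ω)) = (∑ v : SY × SZ, Real.negMulLog (CI5.marg (fun t => probOf μ (fun ω => (ξX ω, ξY ω, ξZ ω, ξU ω)) t) (fun t => (t.2.1, t.2.2.1)) v)) :=
    Finset.sum_congr rfl fun v _ =>
      congrArg Real.negMulLog (CI5.probOf_comp μ (fun ω => (ξX ω, ξY ω, ξZ ω, ξU ω)) hmeas (fun t => (t.2.1, t.2.2.1)) v)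
  have cYU : entropyOf μ (fun ω => (ξY ω, ξU ω)) = (∑ v : SY × SU, Real.negMulLog (CI5.marg (fun t => probOf μ (fun ω => (ξX ω, ξY ω, ξZ ω, ξU ω)) t) (fun t => (t.2.1, t.2.2.2)) v)) :=
    Finset.sum_congr rfl fun v _ =>
      congrArg Real.negMulLog (CI5.probOf_comp μ (fun ω => (ξX ω, ξY ω, ξZ ω, ξU ω)) hmeas (fun t => (t.2.1, t.2.2.2)) v)
  have cZU : entropyOf μ (fun ω => (ξZ ω, ξU ω)) = (∑ v : SZ × SU, Real.negMulLog (CI5.marg (fun t => probOf μ (fun ω => (ξX ω, ξY ω, ξZ ω, ξU ω)) t) (fun t => (t.2.2.1, t.2.2.2)) v)) :=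
    Finset.sum_congr rfl fun v _ =>
      congrArg Real.negMulLog (CI5.probOf_comp μ (fun ω => (ξX ω, ξY ω, ξZ ω, ξU ω)) hmeas (fun t => (t.2.2.1, t.2.2.2)) v)
  have cZ : entropyOf μ ξZ = (∑ v : SZ, Real.negMulLog (CI5.marg (fun t => probOf μ (fun ω => (ξX ω, ξY ω, ξZ ω, ξU ω)) t) (fun t => t.2.2.1) v)) :=
    Finset.sum_congr rfl fun v _ =>
      congrArg Real.negMulLog (CI5.probOf_comp μ (fun ω => (ξX ω, ξY ω, ξZ ω, ξU ω)) hmeas (fun t => t.2.2.1) v)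
  have cU : entropyOf μ ξU = (∑ v : SU, Real.negMulLog (CI5.marg (fun t => probOf μ (fun ω => (ξX ω, ξY ω, ξZ ω, ξU ω)) t) (fun t => t.2.2.2) v)) :=
    Finset.sum_congr rfl fun v _ =>
      congrArg Real.negMulLog (CI5.probOf_comp μ (fun ω => (ξX ω, ξY ω, ξZ ω, ξU ω)) hmeas (fun t => t.2.2.2) v)
  have cXZU : entropyOf μ (fun ω => (ξX ω, ξZ ω, ξU ω)) = (∑ v : SX × SZ × SU, Real.negMulLog (CI5.marg (fun t => probOf μ (fun ω => (ξX ω, ξY ω, ξZ ω, ξU ω)) t) (fun t => (t.1, t.2.2.1, t.2.2.2)) v)) :=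
    Finset.sum_congr rfl fun v _ =>
      congrArg Real.negMulLog (CI5.probOf_comp μ (fun ω => (ξX ω, ξY ω, ξZ ω, ξU ω)) hmeas (fun t => (t.1, t.2.2.1, t.2.2.2)) v)
  have cYZU : entropyOf μ (fun ω => (ξY ω, ξZ ω, ξU ω)) = (∑ v : SY × SZ × SU, Real.negMulLog (CI5.marg (fun t => probOf μ (fun ω => (ξX ω, ξY ω, ξZ ω, ξU ω)) t) (fun t => (t.2.1, t.2.2.1, t.2.2.2)) v)) :=
    Finset.sum_congr rfl fun v _ =>
      congrArg Real.negMulLog (CI5.probOf_comp μ (fun ω => (ξX ω, ξY ω, ξZ ω, ξU ω)) hmeas (fun t => (t.2.1, t.2.2.1, t.2.2.2)) v)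
  unfold ingletonEnt
  rw [cXY, cXZ, cXU, cYZ, cYU, cZU, cZ, cU, cXZU, cYZU]
  exact main
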